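/- Closed form for the number of partitions of a polygon into odd-gons, counted by edges: for every integer n ≥ 1, (2n+1)·∑_{k=1}^{n} C(2n, k−1)·C(n, k) = n·C(3n, n). (Equivalently, (1/n)·∑_{k=1}^{n} C(2n, k−1)·C(n, k) = (1/(2n+1))·C(3n, n), the n-th Fuss–Catalan number of order 3.) -/

import Mathlib

/-- Closed form for the number of partitions of a polygon into odd-gons, counted by
edges: `(2n+1)·∑_{k=1}^{n} C(2n, k-1)·C(n, k) = n·C(3n, n)`. -/
theorem odd_gon_partitions_closed_form (n : ℕ) (hn : 1 ≤ n) :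
    (2 * n + 1) * ∑ k ∈ Finset.Icc 1 n, (2 * n).choose (k - 1) * n.choose k
      = n * (3 * n).choose n := by
  have hsum : ∑ k ∈ Finset.Icc 1 n, (2 * n).choose (k - 1) * n.choose k
      = (3 * n).choose (n - 1) := by
    have hv : (3 * n).choose (n - 1)
        = ∑ ij ∈ Finset.HasAntidiagonal.antidiagonal (n - 1), (2 * n).choose ij.1 * n.choose ij.2 := by
      rw [show 3 * n = 2 * n + n by ring, Nat.add_choose_eq]
    rw [hv, Finset.Nat.sum_antidiagonal_eq_sum_range_succ_mk,
      show (n - 1).succ = n by omega]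
    refine Finset.sum_nbij' (fun k => k - 1) (fun j => j + 1) ?_ ?_ ?_ ?_ ?_ <;>
      simp only [Finset.mem_Icc, Finset.mem_range]
    · intro a ha; omega
    · intro a ha; omega
    · intro a ha; omega
    · intro a ha; omega
    · intro a ha
      have h2 : n.choose a = n.choose (n - 1 - (a - 1)) := by
        rw [← Nat.choose_symm (by omega : a ≤ n)]
        congr 1; omega
      rw [h2]
  rw [hsum]
  have := Nat.choose_succ_right_eq (3 * n) (n - 1)
  have hn1 : n - 1 + 1 = n := Nat.succ_pred_eq_of_pos hn
  rw [hn1] at this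
  have h3 : 3 * n - (n - 1) = 2 * n + 1 := by omega
  rw [h3] at this
  rw [mul_comm, ← this, mul_comm]
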